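/- Let m ≥ 2 and N ≥ 1 be integers, h = 1/N, ω > 0, and let C_0, …, C_N be real numbers satisfying ∑_{γ=0}^{N} C_γ sin(hωγ) = 0, ∑_{γ=0}^{N} C_γ cos(hωγ) = 0, and ∑_{γ=0}^{N} C_γ (hγ)^α = 0 for α = 0, 1, …, m−3. Then for every integer β ≥ N: ∑_{γ=0}^{N} C_γ G_m(hβ − hγ) = D₁ sin(hωβ) + D₂ cos(hωβ) + Q(hβ), where D₁ = ((−1)^m/(4ω^{2m−1})) ∑_{γ=0}^{N} C_γ (hωγ) sin(hωγ), D₂ = ((−1)^m/(4ω^{2m−1})) ∑_{γ=0}^{N} C_γ (hωγ) cos(hωγ), and Q(t) = ((−1)^m/(2ω^{2m−1})) ∑_{k=⌊m/2⌋}^{m−2} ∑_{α=m−2}^{2k−1} ((−1)^{k+α} (m−k−1) ω^{2k−1} / ((2k−1−α)! α!)) · t^{2k−1−α} · ∑_{γ=0}^{N} C_γ (hγ)^α, a polynomial of degree at most m−3 in t. -/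

import Mathlib

open Finset Real

noncomputable section

/-- The fundamental solution `G_m`. -/
def Gm (m : ℕ) (ω : ℝ) (x : ℝ) : ℝ :=
  (-1 : ℝ) ^ m * Real.sign x / (4 * ω ^ (2 * m - 1)) *
    ((2 * (m : ℝ) - 3) * Real.sin (ω * x) - ω * x * Real.cos (ω * x)
      + 2 * ∑ k ∈ Finset.Icc 1 (m - 2),
          (-1 : ℝ) ^ k * ((m : ℝ) - (k : ℝ) - 1) * (ω * x) ^ (2 * k - 1)
            / (Nat.factorial (2 * k - 1)))

end

lemma fact_div (n α : ℕ) (hle : α ≤ n) :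
    (Nat.choose n α : ℝ) / (Nat.factorial n) =
      1 / ((Nat.factorial (n - α)) * (Nat.factorial α)) := by
  have key : (Nat.factorial n : ℝ) =
      (Nat.choose n α) * (Nat.factorial α) * (Nat.factorial (n - α)) := by
    exact_mod_cast (Nat.choose_mul_factorial_mul_factorial hle).symm
  have hc : (0:ℝ) < (Nat.choose n α : ℝ) := by exact_mod_cast Nat.choose_pos hle
  have h1 : (0:ℝ) < (Nat.factorial α : ℝ) := by exact_mod_cast Nat.factorial_pos α
  have h2 : (0:ℝ) < (Nat.factorial (n-α) : ℝ) := by exact_mod_cast Nat.factorial_pos (n-α)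
  rw [key, div_eq_div_iff (by positivity) (by positivity)]
  ring

lemma Gm_of_nonneg (m : ℕ) (ω x : ℝ) (hx : 0 ≤ x) :
    Gm m ω x = (-1 : ℝ) ^ m / (4 * ω ^ (2 * m - 1)) *
      ((2 * (m : ℝ) - 3) * Real.sin (ω * x) - ω * x * Real.cos (ω * x)
        + 2 * ∑ k ∈ Finset.Icc 1 (m - 2),
            (-1 : ℝ) ^ k * ((m : ℝ) - (k : ℝ) - 1) * (ω * x) ^ (2 * k - 1)
              / (Nat.factorial (2 * k - 1))) := by
  rcases hx.lt_or_eq with hlt | heq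
  · rw [Gm, Real.sign_of_pos hlt]; ring
  · rw [← heq]
    have hsum : ∑ k ∈ Finset.Icc 1 (m - 2),
        (-1 : ℝ) ^ k * ((m : ℝ) - (k : ℝ) - 1) * (ω * 0) ^ (2 * k - 1)
          / (Nat.factorial (2 * k - 1)) = 0 := by
      refine Finset.sum_eq_zero fun k hk => ?_
      simp only [Finset.mem_Icc] at hk
      have : 2 * k - 1 ≠ 0 := by omega
      simp [this]
    rw [Gm, Real.sign_zero]
    have hz : (2 * (m : ℝ) - 3) * Real.sin (ω * 0) - ω * 0 * Real.cos (ω * 0)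
        + 2 * ∑ k ∈ Finset.Icc 1 (m - 2),
            (-1 : ℝ) ^ k * ((m : ℝ) - (k : ℝ) - 1) * (ω * 0) ^ (2 * k - 1)
              / (Nat.factorial (2 * k - 1)) = 0 := by
      rw [hsum]; simp
    rw [hz]; ring

/-- For `β ≥ N` the convolution `v(hβ) = ∑ C_γ G_m(hβ − hγ)` equals
`D₁ sin(hωβ) + D₂ cos(hωβ) + Q(hβ)`. -/
theorem convolution_right_of_nodes
    (m N : ℕ) (hm : 2 ≤ m) (hN : 1 ≤ N) (h ω : ℝ) (hh : h = 1 / N) (hω : 0 < ω)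
    (Cc : ℕ → ℝ)
    (hsin : ∑ γ ∈ Finset.range (N + 1), Cc γ * Real.sin (h * ω * γ) = 0)
    (hcos : ∑ γ ∈ Finset.range (N + 1), Cc γ * Real.cos (h * ω * γ) = 0)
    (hpoly : ∀ α : ℕ, α + 3 ≤ m → ∑ γ ∈ Finset.range (N + 1), Cc γ * (h * γ) ^ α = 0)
    (D₁ D₂ : ℝ) (Q : ℝ → ℝ)
    (hD1 : D₁ = (-1 : ℝ) ^ m / (4 * ω ^ (2 * m - 1)) *
        ∑ γ ∈ Finset.range (N + 1), Cc γ * (h * ω * γ) * Real.sin (h * ω * γ))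
    (hD2 : D₂ = (-1 : ℝ) ^ m / (4 * ω ^ (2 * m - 1)) *
        ∑ γ ∈ Finset.range (N + 1), Cc γ * (h * ω * γ) * Real.cos (h * ω * γ))
    (hQ : ∀ t : ℝ, Q t = (-1 : ℝ) ^ m / (2 * ω ^ (2 * m - 1)) *
        ∑ k ∈ Finset.Icc (m / 2) (m - 2), ∑ α ∈ Finset.Icc (m - 2) (2 * k - 1),
          (-1 : ℝ) ^ (k + α) * ((m : ℝ) - (k : ℝ) - 1) * ω ^ (2 * k - 1)
              / ((Nat.factorial (2 * k - 1 - α)) * (Nat.factorial α))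
            * t ^ (2 * k - 1 - α)
            * ∑ γ ∈ Finset.range (N + 1), Cc γ * (h * γ) ^ α)
    :
    ∀ β : ℤ, (N : ℤ) ≤ β →
      ∑ γ ∈ Finset.range (N + 1), Cc γ * Gm m ω (h * (β : ℝ) - h * γ)
        = D₁ * Real.sin (h * ω * (β : ℝ)) + D₂ * Real.cos (h * ω * (β : ℝ)) + Q (h * (β : ℝ)) := by
  intro β hβ
  have hhpos : 0 < h := by
    rw [hh]; positivity
  have hxnn : ∀ γ ∈ Finset.range (N + 1), (0:ℝ) ≤ h * (β : ℝ) - h * γ := by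
    intro γ hγ
    simp only [Finset.mem_range] at hγ
    have h1 : (γ : ℝ) ≤ (β : ℝ) := by
      have : (γ : ℤ) ≤ β := le_trans (by exact_mod_cast Nat.lt_succ_iff.mp hγ) hβ
      exact_mod_cast this
    nlinarith
  -- Step 1: rewrite Gm and split the sum
  have hrw : ∀ γ ∈ Finset.range (N + 1),
      Cc γ * Gm m ω (h * (β : ℝ) - h * γ) =
        ((-1 : ℝ) ^ m / (4 * ω ^ (2 * m - 1)) * (2 * (m : ℝ) - 3)) *
          (Cc γ * Real.sin (ω * (h * (β : ℝ) - h * γ)))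
        - ((-1 : ℝ) ^ m / (4 * ω ^ (2 * m - 1))) *
          (Cc γ * (ω * (h * (β : ℝ) - h * γ) * Real.cos (ω * (h * (β : ℝ) - h * γ))))
        + ((-1 : ℝ) ^ m / (4 * ω ^ (2 * m - 1)) * 2) *
          (Cc γ * ∑ k ∈ Finset.Icc 1 (m - 2),
            (-1 : ℝ) ^ k * ((m : ℝ) - (k : ℝ) - 1) * (ω * (h * (β : ℝ) - h * γ)) ^ (2 * k - 1)
              / (Nat.factorial (2 * k - 1))) := by
    intro γ hγ
    rw [Gm_of_nonneg m ω _ (hxnn γ hγ)]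
    ring
  rw [Finset.sum_congr rfl hrw]
  simp only [Finset.sum_add_distrib, Finset.sum_sub_distrib, ← Finset.mul_sum]
  -- Part 1: sine sum vanishes
  have h1 : ∑ γ ∈ Finset.range (N + 1), Cc γ * Real.sin (ω * (h * (β : ℝ) - h * γ)) = 0 := by
    have : ∀ γ ∈ Finset.range (N + 1),
        Cc γ * Real.sin (ω * (h * (β : ℝ) - h * γ)) =
          Real.sin (h * ω * (β : ℝ)) * (Cc γ * Real.cos (h * ω * γ))
          - Real.cos (h * ω * (β : ℝ)) * (Cc γ * Real.sin (h * ω * γ)) := by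
      intro γ _
      rw [show ω * (h * (β : ℝ) - h * γ) = h * ω * (β : ℝ) - h * ω * γ by ring, Real.sin_sub]
      ring
    rw [Finset.sum_congr rfl this]
    simp only [Finset.sum_sub_distrib, ← Finset.mul_sum]
    rw [hsin, hcos]; ring
  -- Part 2: the x cos x sum
  have h2 : ∑ γ ∈ Finset.range (N + 1),
      Cc γ * (ω * (h * (β : ℝ) - h * γ) * Real.cos (ω * (h * (β : ℝ) - h * γ)))
      = -(Real.cos (h * ω * (β : ℝ)) *
            (∑ γ ∈ Finset.range (N + 1), Cc γ * (h * ω * γ) * Real.cos (h * ω * γ))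
          + Real.sin (h * ω * (β : ℝ)) *
            (∑ γ ∈ Finset.range (N + 1), Cc γ * (h * ω * γ) * Real.sin (h * ω * γ))) := by
    have hpt : ∀ γ ∈ Finset.range (N + 1),
        Cc γ * (ω * (h * (β : ℝ) - h * γ) * Real.cos (ω * (h * (β : ℝ) - h * γ)))
        = (h * ω * (β : ℝ) * Real.cos (h * ω * (β : ℝ))) * (Cc γ * Real.cos (h * ω * γ))
          + (h * ω * (β : ℝ) * Real.sin (h * ω * (β : ℝ))) * (Cc γ * Real.sin (h * ω * γ))
          - Real.cos (h * ω * (β : ℝ)) * (Cc γ * (h * ω * γ) * Real.cos (h * ω * γ))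
          - Real.sin (h * ω * (β : ℝ)) * (Cc γ * (h * ω * γ) * Real.sin (h * ω * γ)) := by
      intro γ _
      rw [show ω * (h * (β : ℝ) - h * γ) = h * ω * (β : ℝ) - h * ω * γ by ring, Real.cos_sub]
      ring
    rw [Finset.sum_congr rfl hpt]
    simp only [Finset.sum_add_distrib, Finset.sum_sub_distrib, ← Finset.mul_sum]
    rw [hsin, hcos]; ring
  -- Part 3: the polynomial sum
  have h3 : ∑ γ ∈ Finset.range (N + 1),
      Cc γ * ∑ k ∈ Finset.Icc 1 (m - 2),
        (-1 : ℝ) ^ k * ((m : ℝ) - (k : ℝ) - 1) * (ω * (h * (β : ℝ) - h * γ)) ^ (2 * k - 1)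
          / (Nat.factorial (2 * k - 1))
      = ∑ k ∈ Finset.Icc (m / 2) (m - 2), ∑ α ∈ Finset.Icc (m - 2) (2 * k - 1),
          (-1 : ℝ) ^ (k + α) * ((m : ℝ) - (k : ℝ) - 1) * ω ^ (2 * k - 1)
              / ((Nat.factorial (2 * k - 1 - α)) * (Nat.factorial α))
            * (h * (β : ℝ)) ^ (2 * k - 1 - α)
            * ∑ γ ∈ Finset.range (N + 1), Cc γ * (h * γ) ^ α := by
    have hinner : ∀ k ∈ Finset.Icc 1 (m - 2),
        (∑ γ ∈ Finset.range (N + 1),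
          Cc γ * ((-1 : ℝ) ^ k * ((m : ℝ) - (k : ℝ) - 1) * (ω * (h * (β : ℝ) - h * γ)) ^ (2 * k - 1)
            / (Nat.factorial (2 * k - 1))))
        = ∑ α ∈ Finset.range (2 * k),
            (-1 : ℝ) ^ (k + α) * ((m : ℝ) - (k : ℝ) - 1) * ω ^ (2 * k - 1)
                / ((Nat.factorial (2 * k - 1 - α)) * (Nat.factorial α))
              * (h * (β : ℝ)) ^ (2 * k - 1 - α)
              * ∑ γ ∈ Finset.range (N + 1), Cc γ * (h * γ) ^ α := by
      intro k hk
      simp only [Finset.mem_Icc] at hk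
      have hpt : ∀ γ ∈ Finset.range (N + 1),
          Cc γ * ((-1 : ℝ) ^ k * ((m : ℝ) - (k : ℝ) - 1) * (ω * (h * (β : ℝ) - h * γ)) ^ (2 * k - 1)
            / (Nat.factorial (2 * k - 1)))
          = ∑ α ∈ Finset.range (2 * k),
              (-1 : ℝ) ^ (k + α) * ((m : ℝ) - (k : ℝ) - 1) * ω ^ (2 * k - 1)
                  / ((Nat.factorial (2 * k - 1 - α)) * (Nat.factorial α))
                * (h * (β : ℝ)) ^ (2 * k - 1 - α)
                * (Cc γ * (h * γ) ^ α) := by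
        intro γ _
        have hb : (ω * (h * (β : ℝ) - h * γ)) ^ (2 * k - 1)
            = ∑ α ∈ Finset.range (2 * k),
                (-(h * (γ : ℝ))) ^ α * (h * (β : ℝ)) ^ (2 * k - 1 - α)
                  * (Nat.choose (2 * k - 1) α : ℝ) * ω ^ (2 * k - 1) := by
          rw [show ω * (h * (β : ℝ) - h * γ) = ω * ((-(h * (γ : ℝ))) + h * (β : ℝ)) by ring,
              mul_pow, add_pow, show 2 * k - 1 + 1 = 2 * k from by omega, Finset.mul_sum]
          exact Finset.sum_congr rfl fun α _ => by ring
        rw [hb, Finset.mul_sum, Finset.sum_div, Finset.mul_sum]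
        refine Finset.sum_congr rfl fun α hα => ?_
        have hle : α ≤ 2 * k - 1 := by
          simp only [Finset.mem_range] at hα; omega
        have hfd := fact_div (2 * k - 1) α hle
        calc Cc γ * ((-1 : ℝ) ^ k * ((m : ℝ) - (k : ℝ) - 1)
                * ((-(h * (γ : ℝ))) ^ α * (h * (β : ℝ)) ^ (2 * k - 1 - α)
                    * (Nat.choose (2 * k - 1) α : ℝ) * ω ^ (2 * k - 1))
                / (Nat.factorial (2 * k - 1)))
            = (Cc γ * ((-1 : ℝ) ^ k * ((m : ℝ) - (k : ℝ) - 1) * (-(h * (γ : ℝ))) ^ α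
                * (h * (β : ℝ)) ^ (2 * k - 1 - α) * ω ^ (2 * k - 1)))
              * ((Nat.choose (2 * k - 1) α : ℝ) / (Nat.factorial (2 * k - 1))) := by ring
          _ = _ := by
              rw [hfd, neg_pow, pow_add]; ring
      rw [Finset.sum_congr rfl hpt, Finset.sum_comm]
      exact Finset.sum_congr rfl fun α _ => (Finset.mul_sum _ _ _).symm
    calc ∑ γ ∈ Finset.range (N + 1),
        Cc γ * ∑ k ∈ Finset.Icc 1 (m - 2),
          (-1 : ℝ) ^ k * ((m : ℝ) - (k : ℝ) - 1) * (ω * (h * (β : ℝ) - h * γ)) ^ (2 * k - 1)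
            / (Nat.factorial (2 * k - 1))
        = ∑ k ∈ Finset.Icc 1 (m - 2), ∑ γ ∈ Finset.range (N + 1),
            Cc γ * ((-1 : ℝ) ^ k * ((m : ℝ) - (k : ℝ) - 1) * (ω * (h * (β : ℝ) - h * γ)) ^ (2 * k - 1)
              / (Nat.factorial (2 * k - 1))) := by
          simp only [Finset.mul_sum]; rw [Finset.sum_comm]
      _ = ∑ k ∈ Finset.Icc 1 (m - 2), ∑ α ∈ Finset.range (2 * k),
            (-1 : ℝ) ^ (k + α) * ((m : ℝ) - (k : ℝ) - 1) * ω ^ (2 * k - 1)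
                / ((Nat.factorial (2 * k - 1 - α)) * (Nat.factorial α))
              * (h * (β : ℝ)) ^ (2 * k - 1 - α)
              * ∑ γ ∈ Finset.range (N + 1), Cc γ * (h * γ) ^ α := Finset.sum_congr rfl hinner
      _ = ∑ k ∈ Finset.Icc 1 (m - 2), ∑ α ∈ Finset.Icc (m - 2) (2 * k - 1),
            (-1 : ℝ) ^ (k + α) * ((m : ℝ) - (k : ℝ) - 1) * ω ^ (2 * k - 1)
                / ((Nat.factorial (2 * k - 1 - α)) * (Nat.factorial α))
              * (h * (β : ℝ)) ^ (2 * k - 1 - α)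
              * ∑ γ ∈ Finset.range (N + 1), Cc γ * (h * γ) ^ α := by
          refine Finset.sum_congr rfl fun k hk => ?_
          simp only [Finset.mem_Icc] at hk
          refine (Finset.sum_subset ?_ ?_).symm
          · intro α hα
            simp only [Finset.mem_Icc] at hα
            simp only [Finset.mem_range]; omega
          · intro α hα hα'
            simp only [Finset.mem_range] at hα
            simp only [Finset.mem_Icc, not_and, not_le] at hα'
            have hαm : α + 3 ≤ m := by
              by_contra hcon
              have h1 : m - 2 ≤ α := by omega
              have := hα' h1
              omega
            rw [hpoly α hαm, mul_zero]
      _ = _ := by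
          refine (Finset.sum_subset ?_ ?_).symm
          · intro k hk
            simp only [Finset.mem_Icc] at hk ⊢; omega
          · intro k hk hk'
            simp only [Finset.mem_Icc] at hk
            simp only [Finset.mem_Icc, not_and, not_le] at hk'
            have hklt : k < m / 2 := by
              by_contra hcon
              have := hk' (by omega)
              omega
            have : Finset.Icc (m - 2) (2 * k - 1) = ∅ := Finset.Icc_eq_empty (by omega)
            rw [this, Finset.sum_empty]
  rw [h1, h2, h3, hD1, hD2, hQ]
  ring
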